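/- A domain R is a splinter if and only if the map R → R⁺ to its absolute integral closure is pure as a map of R-modules. -/

import Mathlib

set_option synthInstance.maxHeartbeats 1000000
set_option maxHeartbeats 1000000

universe u

/-- A ring `R` is a splinter if every finite ring map `R → T` inducing a surjection
on prime spectra is pure as a map of `R`-modules. -/
def IsSplinter (R : Type u) [CommRing R] : Prop :=
  ∀ (T : Type u) [CommRing T] [Algebra R T], Module.Finite R T →
    Function.Surjective (PrimeSpectrum.comap (algebraMap R T)) →
    ∀ (P : Type u) [AddCommGroup P] [Module R P],
      Function.Injective (LinearMap.rTensor P (Algebra.linearMap R T))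

open TensorProduct LinearMap

section Detection

variable {R S P : Type u} [CommRing R] [CommRing S] [Algebra R S]
  [AddCommGroup P] [Module R P]

/-- FG sup of subalgebras is FG. -/
theorem Subalgebra.FG.sup' {A B : Subalgebra R S} (hA : A.FG) (hB : B.FG) : (A ⊔ B).FG := by
  obtain ⟨s, hs, rfl⟩ := Subalgebra.fg_def.mp hA
  obtain ⟨t, ht, rfl⟩ := Subalgebra.fg_def.mp hB
  exact Subalgebra.fg_def.mpr ⟨s ∪ t, hs.union ht, Algebra.adjoin_union s t⟩

/-- If an element of `R ⊗ P` dies in `S ⊗ P`, it dies in `T ⊗ P` for some finitely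
generated subalgebra `T` of `S`. -/
theorem exists_fg_subalgebra_rTensor_eq_zero
    (x : TensorProduct R R P)
    (hx : LinearMap.rTensor P (Algebra.linearMap R S) x = 0) :
    ∃ T : Subalgebra R S, T.FG ∧
      LinearMap.rTensor P (Algebra.linearMap R T) x = 0 := by
  classical
  let ι := {T : Subalgebra R S // T.FG}
  haveI : Nonempty ι := ⟨⟨⊥, Subalgebra.fg_bot⟩⟩
  haveI : IsDirected ι (· ≤ ·) :=
    ⟨fun i j => ⟨⟨i.1 ⊔ j.1, i.2.sup' j.2⟩,
      Subtype.coe_le_coe.mp le_sup_left, Subtype.coe_le_coe.mp le_sup_right⟩⟩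
  let G : ι → Type u := fun i => i.1
  let f : ∀ i j : ι, i ≤ j → G i →ₗ[R] G j := fun i j h =>
    (Subalgebra.inclusion (show i.1 ≤ j.1 from h)).toLinearMap
  haveI hds : DirectedSystem G (fun i j h => f i j h) := by
    refine ⟨?_, ?_⟩ <;> intros <;> rfl
  haveI hds' : DirectedSystem (fun i => G i ⊗[R] P) (fun i j h => rTensor P (f i j h)) := by
    constructor
    · intro i y
      have h1 : f i i le_rfl = LinearMap.id := by ext z; rfl
      rw [h1, rTensor_id, LinearMap.id_apply]
    · intro k j i hij hjk y
      rw [← rTensor_comp_apply]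
      congr 1
  -- the limit of the `G i` is `S`
  let ℓ : Module.DirectLimit G f →ₗ[R] S :=
    Module.DirectLimit.lift R ι G f (fun i => i.1.val.toLinearMap) (fun i j hij z => rfl)
  have ℓinj : Function.Injective ℓ :=
    Module.DirectLimit.lift_injective _ _ (fun i => Subtype.val_injective)
  have ℓsurj : Function.Surjective ℓ := by
    intro s
    refine ⟨Module.DirectLimit.of R ι G f
      ⟨Algebra.adjoin R {s}, Subalgebra.fg_def.mpr ⟨{s}, Set.finite_singleton s, rfl⟩⟩
      ⟨s, Algebra.subset_adjoin (Set.mem_singleton s)⟩, ?_⟩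
    erw [Module.DirectLimit.lift_of]
    rfl
  let e : Module.DirectLimit G f ≃ₗ[R] S := LinearEquiv.ofBijective ℓ ⟨ℓinj, ℓsurj⟩
  let Φ : Module.DirectLimit (fun i => G i ⊗[R] P) (fun i j h => rTensor P (f i j h))
      ≃ₗ[R] S ⊗[R] P :=
    (TensorProduct.directLimitLeft f P).symm.trans (TensorProduct.congr e (LinearEquiv.refl R P))
  have key : ∀ (i : ι), Φ.toLinearMap ∘ₗ
      Module.DirectLimit.of R ι (fun i => G i ⊗[R] P) (fun i j h => rTensor P (f i j h)) i
        = rTensor P i.1.val.toLinearMap := by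
    intro i
    refine TensorProduct.ext' fun g p => ?_
    show Φ (Module.DirectLimit.of R ι (fun i => G i ⊗[R] P)
        (fun i j h => rTensor P (f i j h)) i (g ⊗ₜ p)) = _
    rw [show Φ = (TensorProduct.directLimitLeft f P).symm.trans
      (TensorProduct.congr e (LinearEquiv.refl R P)) from rfl]
    rw [LinearEquiv.trans_apply, TensorProduct.directLimitLeft_symm_of_tmul,
      TensorProduct.congr_tmul]
    rw [show e (Module.DirectLimit.of R ι G f i g) = ℓ (Module.DirectLimit.of R ι G f i g)
      from rfl]
    erw [Module.DirectLimit.lift_of]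
    rfl
  -- place `x` at the bottom
  set i₀ : ι := ⟨⊥, Subalgebra.fg_bot⟩ with hi₀
  let y : G i₀ ⊗[R] P := rTensor P (Algebra.linearMap R (⊥ : Subalgebra R S)) x
  have hcomp : ∀ (i : ι), i.1.val.toLinearMap ∘ₗ Algebra.linearMap R i.1
      = Algebra.linearMap R S := fun i => LinearMap.ext fun r => rfl
  have hz : Φ (Module.DirectLimit.of R ι (fun i => G i ⊗[R] P)
      (fun i j h => rTensor P (f i j h)) i₀ y) = 0 := by
    have hk := LinearMap.congr_fun (key i₀) y
    simp only [LinearMap.coe_comp, Function.comp_apply, LinearEquiv.coe_coe] at hk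
    rw [hk, show y = rTensor P
      (Algebra.linearMap R (⊥ : Subalgebra R S)) x from rfl, ← rTensor_comp_apply, hcomp i₀, hx]
  have hz0 : Module.DirectLimit.of R ι (fun i => G i ⊗[R] P)
      (fun i j h => rTensor P (f i j h)) i₀ y = 0 := by
    apply Φ.injective
    rw [hz, map_zero]
  obtain ⟨j, hij, hj⟩ := Module.DirectLimit.of.zero_exact hz0
  refine ⟨j.1, j.2, ?_⟩
  have hfg : (f i₀ j hij) ∘ₗ Algebra.linearMap R (⊥ : Subalgebra R S)
      = Algebra.linearMap R j.1 := LinearMap.ext fun r => rfl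
  rw [show (rTensor P (Algebra.linearMap R (j.1 : Subalgebra R S))) x
    = rTensor P (f i₀ j hij) y from by
      rw [show y = rTensor P (Algebra.linearMap R (⊥ : Subalgebra R S)) x from rfl,
        ← rTensor_comp_apply, hfg], hj]

end Detection

section Backward

variable (R : Type u) [CommRing R] [IsDomain R]

/-- an injective integral extension of a domain `R` by a domain maps to `R⁺`. -/
noncomputable def toAbsoluteIntegralClosure (D : Type u) [CommRing D] [IsDomain D]
    [Algebra R D] [Algebra.IsIntegral R D] (hinj : Function.Injective (algebraMap R D)) :
    D →ₐ[R] integralClosure R (AlgebraicClosure (FractionRing R)) := by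
  haveI : Module.IsTorsionFree R D := Module.isTorsionFree_iff_algebraMap_injective.mpr hinj
  haveI : Module.IsTorsionFree R (AlgebraicClosure (FractionRing R)) :=
    Module.isTorsionFree_iff_algebraMap_injective.mpr <| by
      rw [IsScalarTower.algebraMap_eq R (FractionRing R) (AlgebraicClosure (FractionRing R))]
      exact (algebraMap (FractionRing R) (AlgebraicClosure (FractionRing R))).injective.comp
        (IsFractionRing.injective R (FractionRing R))
  letI φ : D →ₐ[R] AlgebraicClosure (FractionRing R) := IsAlgClosed.lift
  exact φ.codRestrict (integralClosure R (AlgebraicClosure (FractionRing R)))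
    (fun d => (Algebra.IsIntegral.isIntegral (R := R) d).map φ)

end Backward


/-- pure implies splinter. -/
theorem isSplinter_of_pure (R : Type u) [CommRing R] [IsDomain R]
    (h : ∀ (P : Type u) [AddCommGroup P] [Module R P],
      Function.Injective (LinearMap.rTensor P
        (Algebra.linearMap R (integralClosure R (AlgebraicClosure (FractionRing R)))))) :
    IsSplinter R := by
  intro T _ _ hfin hsurj P _ _
  obtain ⟨Q, hQ⟩ := hsurj ⟨⊥, Ideal.bot_prime⟩
  have hQbot : Q.asIdeal.comap (algebraMap R T) = ⊥ := congrArg PrimeSpectrum.asIdeal hQ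
  haveI := Q.isPrime
  haveI : Module.Finite R (T ⧸ Q.asIdeal) :=
    Module.Finite.of_surjective (Ideal.Quotient.mkₐ R Q.asIdeal).toLinearMap
      Ideal.Quotient.mk_surjective
  have hinj : Function.Injective (algebraMap R (T ⧸ Q.asIdeal)) := by
    rw [injective_iff_map_eq_zero]
    intro r hr
    rw [IsScalarTower.algebraMap_apply R T (T ⧸ Q.asIdeal),
      Ideal.Quotient.algebraMap_eq, Ideal.Quotient.eq_zero_iff_mem] at hr
    have : r ∈ Q.asIdeal.comap (algebraMap R T) := hr
    rw [hQbot] at this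
    exact this
  have ψ : (T ⧸ Q.asIdeal) →ₐ[R] integralClosure R (AlgebraicClosure (FractionRing R)) :=
    toAbsoluteIntegralClosure R (T ⧸ Q.asIdeal) hinj
  have hfact : Algebra.linearMap R (integralClosure R (AlgebraicClosure (FractionRing R)))
      = ψ.toLinearMap ∘ₗ ((Ideal.Quotient.mkₐ R Q.asIdeal).toLinearMap
          ∘ₗ Algebra.linearMap R T) := by
    refine LinearMap.ext fun r => ?_
    simp only [Algebra.linearMap_apply, LinearMap.coe_comp, Function.comp_apply,
      AlgHom.toLinearMap_apply, Ideal.Quotient.mkₐ_eq_mk]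
    rw [← Ideal.Quotient.algebraMap_eq, ← IsScalarTower.algebraMap_apply,
      AlgHom.commutes]
  have hP := h P
  rw [hfact, rTensor_comp, rTensor_comp, LinearMap.coe_comp, LinearMap.coe_comp] at hP
  exact hP.of_comp.of_comp

/-- splinter implies pure. -/
theorem pure_of_isSplinter (R : Type u) [CommRing R] [IsDomain R] (hspl : IsSplinter R)
    (P : Type u) [AddCommGroup P] [Module R P] :
    Function.Injective (LinearMap.rTensor P
      (Algebra.linearMap R (integralClosure R (AlgebraicClosure (FractionRing R))))) := by
  have hinjplus : Function.Injective
      (algebraMap R (integralClosure R (AlgebraicClosure (FractionRing R)))) := by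
    have h1 : Function.Injective (algebraMap R (AlgebraicClosure (FractionRing R))) := by
      rw [IsScalarTower.algebraMap_eq R (FractionRing R) (AlgebraicClosure (FractionRing R))]
      exact (algebraMap (FractionRing R) (AlgebraicClosure (FractionRing R))).injective.comp
        (IsFractionRing.injective R (FractionRing R))
    intro a b hab
    exact h1 (congrArg Subtype.val hab)
  rw [injective_iff_map_eq_zero]
  intro x hx
  obtain ⟨T, hTfg, hT⟩ := exists_fg_subalgebra_rTensor_eq_zero x hx
  haveI hfin : Module.Finite R T := by
    obtain ⟨s, rfl⟩ := hTfg
    exact ⟨(Submodule.fg_top _).mpr <| fg_adjoin_of_finite s.finite_toSet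
        (fun x _ => integralClosure.isIntegral (R := R)
          (A := AlgebraicClosure (FractionRing R)) x)⟩
  have hTinj : Function.Injective (algebraMap R T) := by
    intro a b hab
    exact hinjplus (congrArg
      (T.val : T →ₐ[R] integralClosure R (AlgebraicClosure (FractionRing R))) hab)
  have hsurj : Function.Surjective (PrimeSpectrum.comap (algebraMap R T)) := by
    intro p
    obtain ⟨Q, -, hQp, hQc⟩ := Ideal.exists_ideal_over_prime_of_isIntegral (S := T)
      p.asIdeal ⊥ (by
        intro r hr
        have h0 : algebraMap R T r = 0 := by simpa using hr
        have hr0 : r = 0 := hTinj (by rw [h0, map_zero])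
        simp [hr0])
    exact ⟨⟨Q, hQp⟩, PrimeSpectrum.ext hQc⟩
  exact (injective_iff_map_eq_zero _).mp (hspl T hfin hsurj P) x hT

/-- A domain `R` is a splinter if and only if the map to its absolute integral
closure `R⁺` (the integral closure of `R` in an algebraic closure of its fraction
field) is pure as a map of `R`-modules. -/
theorem isSplinter_iff_pure_absoluteIntegralClosure
    (R : Type u) [CommRing R] [IsDomain R] :
    IsSplinter R ↔
      ∀ (P : Type u) [AddCommGroup P] [Module R P],
        Function.Injective (LinearMap.rTensor P
          (Algebra.linearMap R (integralClosure R (AlgebraicClosure (FractionRing R))))) :=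
  ⟨fun hspl P _ _ => pure_of_isSplinter R hspl P, fun h => isSplinter_of_pure R h⟩
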